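/- Let n be a nonzero integer and define Q : (0,∞) × ℝ → ℂ by Q(r,θ) := ( (Θ_o/(Θ_o + R^{2n}·Θ̄_o))·r^{n} + (Θ̄_o/(Θ̄_o + R^{−2n}·Θ_o))·r^{−n} ) · e^{i n θ}. Then Q satisfies the Laplace equation in polar coordinates, ∂_r( r·∂_r Q(r,θ) ) + (1/r)·∂²_θ Q(r,θ) = 0 for all r > 0 and θ ∈ ℝ; moreover Q(1,θ) = e^{i n θ} for all θ, and Q satisfies the boundary condition α_o·∂_r Q(R,θ) − (β_o/R)·∂_θ Q(R,θ) = 0 for all θ ∈ ℝ. -/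

import Mathlib

open Complex

lemma expDeriv (n : ℤ) (t : ℝ) :
    HasDerivAt (fun s : ℝ => Complex.exp (I * (n : ℂ) * (s : ℂ)))
      (I * (n : ℂ) * Complex.exp (I * (n : ℂ) * (t : ℂ))) t := by
  have h : HasDerivAt (fun z : ℂ => Complex.exp (I * (n : ℂ) * z))
      (Complex.exp (I * (n : ℂ) * (t : ℂ)) * (I * (n : ℂ) * 1)) ((t : ℝ) : ℂ) :=
    ((hasDerivAt_id ((t : ℝ) : ℂ)).const_mul (I * (n : ℂ))).cexp
  have h2 := h.comp_ofReal
  convert h2 using 1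
  ring

lemma radialDeriv (A B E : ℂ) (n : ℤ) {r : ℝ} (hr : r ≠ 0) :
    HasDerivAt (fun u : ℝ => (A * (u : ℂ) ^ n + B * (u : ℂ) ^ (-n)) * E)
      ((A * ((n : ℂ) * (r : ℂ) ^ (n - 1)) + B * (((-n : ℤ) : ℂ) * (r : ℂ) ^ (-n - 1))) * E) r := by
  have hr' : (r : ℂ) ≠ 0 := by exact_mod_cast hr
  have h1 := ((hasDerivAt_zpow n (r : ℂ) (Or.inl hr')).comp_ofReal).const_mul A
  have h2 := ((hasDerivAt_zpow (-n) (r : ℂ) (Or.inl hr')).comp_ofReal).const_mul B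
  exact (h1.add h2).mul_const E


lemma denNe (a b c : ℝ) (ha : 0 < a) (hc : 0 < c) :
    ((a : ℂ) + (b : ℂ) * I) + (c : ℂ) * ((a : ℂ) - (b : ℂ) * I) ≠ 0 := by
  intro h
  have h2 := congrArg Complex.re h
  simp only [Complex.add_re, Complex.mul_re, Complex.ofReal_re, Complex.ofReal_im,
    Complex.sub_re, Complex.sub_im, Complex.mul_im, Complex.I_re, Complex.I_im,
    Complex.add_im, Complex.zero_re] at h2
  nlinarith

lemma denNe' (a b c : ℝ) (ha : 0 < a) (hc : 0 < c) :
    ((a : ℂ) - (b : ℂ) * I) + (c : ℂ) * ((a : ℂ) + (b : ℂ) * I) ≠ 0 := by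
  intro h
  have h2 := congrArg Complex.re h
  simp only [Complex.add_re, Complex.mul_re, Complex.ofReal_re, Complex.ofReal_im,
    Complex.sub_re, Complex.sub_im, Complex.mul_im, Complex.I_re, Complex.I_im,
    Complex.add_im, Complex.zero_re] at h2
  nlinarith

theorem statement1 (αo βo R : ℝ) (hαo : 0 < αo) (hβo : 0 ≤ βo) (hR : 2 ≤ R)
    (Θo : ℂ) (hΘo : Θo = (αo : ℂ) + (βo : ℂ) * I)
    (n : ℤ) (hn : n ≠ 0)
    (Q : ℝ → ℝ → ℂ)
    (hQ : ∀ r θ : ℝ, Q r θ =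
      (Θo / (Θo + ((R ^ (2 * n) : ℝ) : ℂ) * (starRingEnd ℂ) Θo) * (r : ℂ) ^ n
        + (starRingEnd ℂ) Θo / ((starRingEnd ℂ) Θo + ((R ^ (-(2 * n)) : ℝ) : ℂ) * Θo)
            * (r : ℂ) ^ (-n))
        * Complex.exp (I * (n : ℂ) * (θ : ℂ))) :
    (∀ r θ : ℝ, 0 < r →
      deriv (fun s : ℝ => (s : ℂ) * deriv (fun u : ℝ => Q u θ) s) r
        + (1 / (r : ℂ)) * deriv (deriv (fun t : ℝ => Q r t)) θ = 0)
    ∧ (∀ θ : ℝ, Q 1 θ = Complex.exp (I * (n : ℂ) * (θ : ℂ)))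
    ∧ ∀ θ : ℝ,
      (αo : ℂ) * deriv (fun u : ℝ => Q u θ) R
        - ((βo / R : ℝ) : ℂ) * deriv (fun t : ℝ => Q R t) θ = 0 := by
  have hR0 : (0 : ℝ) < R := by linarith
  have hRne : R ≠ 0 := ne_of_gt hR0
  have hRc : (R : ℂ) ≠ 0 := by exact_mod_cast hRne
  set A : ℂ := Θo / (Θo + ((R ^ (2 * n) : ℝ) : ℂ) * (starRingEnd ℂ) Θo) with hA
  set B : ℂ := (starRingEnd ℂ) Θo / ((starRingEnd ℂ) Θo + ((R ^ (-(2 * n)) : ℝ) : ℂ) * Θo) with hB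
  have hconj : (starRingEnd ℂ) Θo = (αo : ℂ) - (βo : ℂ) * I := by
    rw [hΘo]; simp [map_add, map_mul, Complex.conj_ofReal, Complex.conj_I]; ring
  have hx : (R : ℂ) ^ n ≠ 0 := zpow_ne_zero n hRc
  have hx2 : (R : ℂ) ^ n * (R : ℂ) ^ n ≠ 0 := mul_ne_zero hx hx
  -- cast lemmas
  have hc1 : ((R ^ (2 * n) : ℝ) : ℂ) = (R : ℂ) ^ n * (R : ℂ) ^ n := by
    push_cast
    rw [two_mul, zpow_add₀ hRc]
  have hc2 : ((R ^ (-(2 * n)) : ℝ) : ℂ) = ((R : ℂ) ^ n * (R : ℂ) ^ n)⁻¹ := by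
    push_cast
    rw [zpow_neg, two_mul, zpow_add₀ hRc]
  -- nonzero denominators
  have hD1 : Θo + ((R ^ (2 * n) : ℝ) : ℂ) * (starRingEnd ℂ) Θo ≠ 0 := by
    rw [hconj, hΘo]
    exact denNe αo βo _ hαo (zpow_pos hR0 (2 * n))
  have hD2 : (starRingEnd ℂ) Θo + ((R ^ (-(2 * n)) : ℝ) : ℂ) * Θo ≠ 0 := by
    rw [hconj, hΘo]
    exact denNe' αo βo _ hαo (zpow_pos hR0 (-(2 * n)))
  have hD : Θo + ((R : ℂ) ^ n * (R : ℂ) ^ n) * (starRingEnd ℂ) Θo ≠ 0 := hc1 ▸ hD1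
  have hD2' : (starRingEnd ℂ) Θo + ((R : ℂ) ^ n * (R : ℂ) ^ n)⁻¹ * Θo ≠ 0 := hc2 ▸ hD2
  have hnc : (n : ℂ) ≠ 0 := Int.cast_ne_zero.mpr hn
  -- clean forms of A and B
  have hAeq : A = Θo / (Θo + ((R : ℂ) ^ n * (R : ℂ) ^ n) * (starRingEnd ℂ) Θo) := by
    rw [hA, hc1]
  have hBeq : B = (starRingEnd ℂ) Θo * ((R : ℂ) ^ n * (R : ℂ) ^ n)
      / (Θo + ((R : ℂ) ^ n * (R : ℂ) ^ n) * (starRingEnd ℂ) Θo) := by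
    rw [hB, hc2, div_eq_div_iff hD2' hD]
    field_simp
    ring
  have hAB : A + B = 1 := by
    rw [hAeq, hBeq, ← add_div, div_eq_one_iff_eq hD]
    ring
  -- function forms
  have hQr : ∀ θ : ℝ, (fun u : ℝ => Q u θ)
      = fun u : ℝ => (A * (u : ℂ) ^ n + B * (u : ℂ) ^ (-n)) * Complex.exp (I * (n : ℂ) * (θ : ℂ)) :=
    fun θ => funext fun u => hQ u θ
  have hQθ : ∀ r : ℝ, (fun t : ℝ => Q r t)
      = fun t : ℝ => (A * (r : ℂ) ^ n + B * (r : ℂ) ^ (-n)) * Complex.exp (I * (n : ℂ) * (t : ℂ)) :=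
    fun r => funext fun t => hQ r t
  have hDθ : ∀ (C : ℂ) (t : ℝ),
      deriv (fun s : ℝ => C * Complex.exp (I * (n : ℂ) * (s : ℂ))) t
        = C * (I * (n : ℂ) * Complex.exp (I * (n : ℂ) * (t : ℂ))) :=
    fun C t => ((expDeriv n t).const_mul C).deriv
  have hDr : ∀ (θ : ℝ) {r : ℝ}, r ≠ 0 →
      deriv (fun u : ℝ => Q u θ) r
        = (A * ((n : ℂ) * (r : ℂ) ^ (n - 1)) + B * (((-n : ℤ) : ℂ) * (r : ℂ) ^ (-n - 1)))
            * Complex.exp (I * (n : ℂ) * (θ : ℂ)) := by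
    intro θ r hr
    rw [hQr θ]
    exact (radialDeriv A B _ n hr).deriv
  refine ⟨?_, ?_, ?_⟩
  · -- Laplace
    intro r θ hr
    have hrne : r ≠ 0 := ne_of_gt hr
    have hrc : (r : ℂ) ≠ 0 := by exact_mod_cast hrne
    have hev : (fun s : ℝ => (s : ℂ) * deriv (fun u : ℝ => Q u θ) s)
        =ᶠ[nhds r] fun s : ℝ =>
          ((A * (n : ℂ)) * (s : ℂ) ^ n + (-(B * (n : ℂ))) * (s : ℂ) ^ (-n))
            * Complex.exp (I * (n : ℂ) * (θ : ℂ)) := by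
      filter_upwards [eventually_ne_nhds hrne] with s hs
      rw [hDr θ hs]
      have hsc : (s : ℂ) ≠ 0 := by exact_mod_cast hs
      rw [zpow_sub_one₀ hsc n, zpow_sub_one₀ hsc (-n)]
      push_cast
      linear_combination ((A * (n : ℂ) * (s : ℂ) ^ n - B * (n : ℂ) * (s : ℂ) ^ (-n))
        * Complex.exp (I * (n : ℂ) * (θ : ℂ))) * (mul_inv_cancel₀ hsc)
    rw [hev.deriv_eq,
      (radialDeriv (A * (n : ℂ)) (-(B * (n : ℂ)))
        (Complex.exp (I * (n : ℂ) * (θ : ℂ))) n hrne).deriv]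
    have hsnd : deriv (deriv (fun t : ℝ => Q r t)) θ
        = (A * (r : ℂ) ^ n + B * (r : ℂ) ^ (-n)) * (I * (n : ℂ))
            * (I * (n : ℂ) * Complex.exp (I * (n : ℂ) * (θ : ℂ))) := by
      rw [hQθ r]
      have : deriv (fun t : ℝ =>
          (A * (r : ℂ) ^ n + B * (r : ℂ) ^ (-n)) * Complex.exp (I * (n : ℂ) * (t : ℂ)))
          = fun t : ℝ => ((A * (r : ℂ) ^ n + B * (r : ℂ) ^ (-n)) * (I * (n : ℂ)))
              * Complex.exp (I * (n : ℂ) * (t : ℂ)) := by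
        funext t
        rw [hDθ]
        ring
      rw [this, hDθ]
    rw [hsnd]
    rw [zpow_sub_one₀ hrc n, zpow_sub_one₀ hrc (-n), zpow_neg (r : ℂ) n]
    push_cast
    linear_combination ((1 / (r : ℂ)) * (A * (r : ℂ) ^ n + B * ((r : ℂ) ^ n)⁻¹)
      * (n : ℂ) * (n : ℂ) * Complex.exp (I * (n : ℂ) * (θ : ℂ))) * Complex.I_mul_I
  · -- trace
    intro θ
    rw [hQ 1 θ]
    push_cast
    rw [one_zpow, one_zpow, mul_one, mul_one, hAB, one_mul]
  · -- boundary condition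
    intro θ
    rw [hDr θ hRne, hQθ R, hDθ]
    rw [hAeq, hBeq, hconj, hΘo]
    rw [zpow_sub_one₀ hRc n, zpow_sub_one₀ hRc (-n), zpow_neg (R : ℂ) n]
    rw [hconj, hΘo] at hD
    push_cast
    field_simp
    ring
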